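/- Let m be a positive integer. Let R ∈ ℝ^{(m+1)×(m+1)} be upper triangular and invertible, with leading m×m principal submatrix R_m and ρ = R_{m+1,m+1} its bottom-right entry. Let Ĥ ∈ ℝ^{(m+1)×m} be a matrix whose last row equals h^{(h)}·e_mᵀ for a scalar h^{(h)} ∈ ℝ, and let H̄ = R·Ĥ·R_m⁻¹. Then the last row of H̄ equals h·e_mᵀ with h = H̄_{m+1,m} (i.e., H̄_{m+1,j} = 0 for all j < m), and h^{(h)}/(R_m)_{m,m} = h/ρ, i.e., h^{(h)}·ρ = h·(R_m)_{m,m}. -/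
import Mathlib


/-- Proposition 2.1, Eq. (2.13): with `R ∈ ℝ^{(m+1)×(m+1)}` upper
triangular invertible, `Rm` its leading principal submatrix, `ρ = R_{m+1,m+1}`,
`Ĥ ∈ ℝ^{(m+1)×m}` with last row `h⁽ʰ⁾·e_mᵀ`, and `H̄ = R·Ĥ·Rm⁻¹`, the last row of
`H̄` equals `h·e_mᵀ` with `h = H̄_{m+1,m}` (i.e., `H̄_{m+1,j} = 0` for `j < m`), and
`h⁽ʰ⁾/(Rm)_{m,m} = h/ρ`, i.e., `h⁽ʰ⁾·ρ = h·(Rm)_{m,m}`. -/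
theorem arnoldi_hessenberg_subdiagonal_relation
    (m : ℕ) (hm : 0 < m)
    (R : Matrix (Fin (m + 1)) (Fin (m + 1)) ℝ)
    (htri : ∀ i j : Fin (m + 1), (j : ℕ) < (i : ℕ) → R i j = 0)
    (hinv : IsUnit R)
    (Rm : Matrix (Fin m) (Fin m) ℝ)
    (hRm : Rm = R.submatrix Fin.castSucc Fin.castSucc)
    (ρ : ℝ) (hρ : ρ = R (Fin.last m) (Fin.last m))
    (Hhat : Matrix (Fin (m + 1)) (Fin m) ℝ) (hh : ℝ)
    (hrow : ∀ j : Fin m,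
      Hhat (Fin.last m) j = hh * (Pi.single (⟨m - 1, by omega⟩ : Fin m) (1 : ℝ) : Fin m → ℝ) j)
    (Hbar : Matrix (Fin (m + 1)) (Fin m) ℝ)
    (hHbar : Hbar = R * Hhat * Rm⁻¹) :
    (∀ j : Fin m, j ≠ ⟨m - 1, by omega⟩ → Hbar (Fin.last m) j = 0) ∧
    hh * ρ = Hbar (Fin.last m) ⟨m - 1, by omega⟩ * Rm ⟨m - 1, by omega⟩ ⟨m - 1, by omega⟩ := by
  set p : Fin m := ⟨m - 1, by omega⟩ with hp
  -- diagonal entries of R are nonzero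
  have hdetR : R.det = ∏ i, R i i :=
    Matrix.det_of_upperTriangular (fun i j hij => htri i j hij)
  have hdR : R.det ≠ 0 := ((Matrix.isUnit_iff_isUnit_det R).mp hinv).ne_zero
  have hdiag : ∀ i : Fin (m + 1), R i i ≠ 0 := by
    rw [hdetR] at hdR
    intro i
    exact Finset.prod_ne_zero_iff.mp hdR i (Finset.mem_univ i)
  -- Rm is invertible
  have htriRm : ∀ i j : Fin m, (j : ℕ) < (i : ℕ) → Rm i j = 0 := by
    intro i j hij
    rw [hRm]
    exact htri _ _ hij
  have hdetRm : Rm.det = ∏ i, Rm i i :=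
    Matrix.det_of_upperTriangular (fun i j hij => htriRm i j hij)
  have hdRm : Rm.det ≠ 0 := by
    rw [hdetRm]
    refine Finset.prod_ne_zero_iff.mpr fun i _ => ?_
    rw [hRm]
    exact hdiag _
  have hc : Rm p p ≠ 0 := by
    rw [hRm]
    exact hdiag _
  -- key: the last row of Rm⁻¹ is (1/Rm p p) • eₚᵀ
  have key : ∀ j : Fin m, Rm p p * Rm⁻¹ p j = if p = j then 1 else 0 := by
    intro j
    have h1 := congrFun (congrFun (Matrix.mul_nonsing_inv Rm (isUnit_iff_ne_zero.mpr hdRm)) p) j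
    rw [Matrix.mul_apply, Finset.sum_eq_single p] at h1
    · rw [h1, Matrix.one_apply]
    · intro k _ hk
      rw [htriRm p k (by
        have hpv : (p : ℕ) = m - 1 := rfl
        have hkm : (k : ℕ) < m := k.isLt
        have hne : (k : ℕ) ≠ m - 1 := fun h => hk (Fin.ext (h.trans hpv.symm))
        omega), zero_mul]
    · simp
  -- entries of the last row of Hbar
  have hRH : ∀ k : Fin m, (R * Hhat) (Fin.last m) k = ρ * Hhat (Fin.last m) k := by
    intro k
    rw [Matrix.mul_apply, Finset.sum_eq_single (Fin.last m)]
    · rw [hρ]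
    · intro i _ hi
      rw [htri (Fin.last m) i (by simpa using Fin.val_lt_last hi), zero_mul]
    · simp
  have hentry : ∀ j : Fin m, Hbar (Fin.last m) j = ρ * hh * Rm⁻¹ p j := by
    intro j
    rw [hHbar, Matrix.mul_apply]
    have : ∀ k : Fin m, (R * Hhat) (Fin.last m) k * Rm⁻¹ k j
        = (if k = p then ρ * hh * Rm⁻¹ p j else 0) := by
      intro k
      rw [hRH k, hrow k]
      by_cases hk : k = p
      · subst hk; simp [Pi.single_apply]; try ring
      · simp [Pi.single_apply, hk]
    rw [Finset.sum_congr rfl fun k _ => this k]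
    simp
  constructor
  · intro j hj
    have hk := key j
    rw [if_neg (fun h => hj h.symm)] at hk
    rw [hentry j, mul_eq_zero.mp hk |>.resolve_left hc, mul_zero]
  · have hk := key p
    rw [if_pos rfl] at hk
    rw [hentry p]
    calc hh * ρ = ρ * hh * (Rm p p * Rm⁻¹ p p) := by rw [hk]; ring
    _ = ρ * hh * Rm⁻¹ p p * Rm p p := by ring
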